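/- Let K be a field and let m, n, d be positive integers with n ≤ m and m − n < d ≤ m. Let C be a K-linear subspace of the space of m×m matrices over K with dim_K C = m·(m − d + 1) and such that every nonzero matrix in C has rank at least d. For any injective map f : {1,...,n} → {1,...,m} (selecting n of the m columns), the punctured code C' = { the m×n matrix whose columns are the columns of A indexed by f : A ∈ C } is a K-linear subspace of K^{m×n} with dim_K C' = m·(m − d + 1), and every nonzero matrix in C' has rank at least d − (m − n); in particular C' is MRD. -/

import Mathlib

open Matrix

/-- The `K`-linear "puncturing" map keeping only the columns selected by `f`. -/
def puncturingMap (K : Type*) [Field K] (m n : ℕ) (f : Fin n → Fin m) :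
    Matrix (Fin m) (Fin m) K →ₗ[K] Matrix (Fin m) (Fin n) K where
  toFun A := A.submatrix id f
  map_add' := by intro A B; ext i j; simp [Matrix.submatrix]
  map_smul' := by intro c A; ext i j; simp [Matrix.submatrix]

/-- puncturing a square MRD code yields an MRD code. -/
theorem puncturing_MRD (K : Type*) [Field K] (m n d : ℕ)
    (hn : 0 < n) (hnm : n ≤ m) (hmnd : m - n < d) (hdm : d ≤ m)
    (C : Submodule K (Matrix (Fin m) (Fin m) K))
    (hdim : Module.finrank K C = m * (m - d + 1))
    (hC : ∀ A ∈ C, A ≠ 0 → d ≤ A.rank)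
    (f : Fin n → Fin m) (hf : Function.Injective f) :
    Module.finrank K (C.map (puncturingMap K m n f)) = m * (m - d + 1) ∧
      ∀ B ∈ C.map (puncturingMap K m n f), B ≠ 0 → d - (m - n) ≤ B.rank := by
  classical
  -- Key rank inequality: A.rank ≤ (A.submatrix id f).rank + (m - n)
  have key : ∀ A : Matrix (Fin m) (Fin m) K,
      A.rank ≤ (A.submatrix id f).rank + (m - n) := by
    intro A
    rw [Matrix.rank_eq_finrank_span_cols, Matrix.rank_eq_finrank_span_cols]
    set S : Set (Fin m) := Set.range f with hS
    have h1 : Set.range A.col = A.col '' S ∪ A.col '' Sᶜ := by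
      rw [← Set.image_union, Set.union_compl_self, Set.image_univ]
    rw [h1, Submodule.span_union]
    have hsup := Submodule.finrank_sup_add_finrank_inf_eq
      (Submodule.span K (A.col '' S)) (Submodule.span K (A.col '' Sᶜ))
    have h2 : A.col '' S = Set.range (A.submatrix id f).col := by
      have he : (A.submatrix id f).col = A.col ∘ f := by ext j i; rfl
      rw [he, Set.range_comp, hS]
    have h3 : Module.finrank K (Submodule.span K (A.col '' Sᶜ)) ≤ m - n := by
      have himg : A.col '' Sᶜ = Set.range (fun x : ↥Sᶜ => A.col x) := Set.image_eq_range _ _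
      rw [himg]
      refine le_trans (finrank_range_le_card _) ?_
      have : Fintype.card ↥Sᶜ = m - n := by
        rw [Fintype.card_compl_set]
        simp [hS, Set.card_range_of_injective hf]
      omega
    rw [h2] at hsup ⊢
    omega
  -- The restriction of the puncturing map to C is injective
  have hker : ∀ A ∈ C, (puncturingMap K m n f) A = 0 → A = 0 := by
    intro A hA h0
    by_contra hA0
    have h1 := hC A hA hA0
    have h2 := key A
    have : (A.submatrix id f) = 0 := h0
    rw [this, Matrix.rank_zero] at h2
    omega
  -- dimension of mapped code
  have hFD : FiniteDimensional K C := by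
    infer_instance
  have hdim' : Module.finrank K (C.map (puncturingMap K m n f)) = m * (m - d + 1) := by
    set L := (puncturingMap K m n f).domRestrict C with hL
    have hrange : LinearMap.range L = C.map (puncturingMap K m n f) := by
      rw [hL, LinearMap.range_domRestrict]
    have hkerL : LinearMap.ker L = ⊥ := by
      rw [LinearMap.ker_eq_bot']
      rintro ⟨A, hA⟩ h0
      have : (puncturingMap K m n f) A = 0 := h0
      have := hker A hA this
      exact Subtype.ext this
    have := LinearMap.finrank_range_add_finrank_ker L
    rw [hrange, hkerL] at this
    simpa [hdim] using this
  refine ⟨hdim', ?_⟩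
  rintro B ⟨A, hA, rfl⟩ hB0
  have hA0 : A ≠ 0 := by
    rintro rfl
    exact hB0 (map_zero _)
  have h1 := hC A hA hA0
  have h2 := key A
  have : (puncturingMap K m n f) A = A.submatrix id f := rfl
  rw [this] at hB0 ⊢
  omega
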